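/- For a nonzero ordinal γ and nonzero finite m, the ordinal ω^γ·m + 1 (with the order topology) is not homeomorphic to any subspace of ω^γ·m; in particular ω^γ·m + 1 and ω^γ·m are not biembeddable. -/

import Mathlib

open Set Ordinal
open scoped Cardinal

noncomputable section

/-- Derived set (non-isolated points) of a set of ordinals, as a subspace. -/
def deriv' (s : Set Ordinal.{0}) : Set Ordinal.{0} := {x ∈ s | x ∈ closure (s \ {x})}

/-- Iterated Cantor–Bendixson derivative. -/
def iterDeriv (s : Set Ordinal.{0}) (o : Ordinal.{0}) : Set Ordinal.{0} :=
  Ordinal.limitRecOn o s (fun _ ih => deriv' ih) (fun o _ ih => ⋂ (p : Ordinal.{0}) (h : p < o), ih p h)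

/-- `s` contains a homeomorphic copy of the ordinal `α` (with its order topology). -/
def HomeoCopy (α : Ordinal.{0}) (s : Set Ordinal.{0}) : Prop :=
  ∃ t : Set Ordinal, t ⊆ s ∧ Nonempty ((Iio α : Set Ordinal.{0}) ≃ₜ t)

/-- Two ordinals are biembeddable: each is homeomorphic to a subspace of the other. -/
def Biembed (α β : Ordinal.{0}) : Prop := HomeoCopy α (Iio β) ∧ HomeoCopy β (Iio α)

/-- Two sets of ordinals are order-homeomorphic: there is an order-preserving homeomorphism. -/
def OrderHomeo (X Y : Set Ordinal.{0}) : Prop :=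
  ∃ e : X ≃ₜ Y, ∀ a b : X, a ≤ b ↔ e a ≤ e b

/-- An ordinal is order-reinforcing. -/
def OrderReinforcing (α : Ordinal.{0}) : Prop :=
  ∀ X : Set Ordinal, Nonempty ((Iio α : Set Ordinal.{0}) ≃ₜ X) → ∃ Y ⊆ X, OrderHomeo (Iio α) Y

/-- The Cantor–Bendixson rank of an ordinal: the least exponent in its Cantor normal form. -/
def CB (x : Ordinal.{0}) : Ordinal := if x = 0 then 0 else sSup {γ | (ω : Ordinal.{0}) ^ γ ∣ x}

/-- Natural (Hessenberg) addition, as Mathlib's former `Ordinal.nadd`. -/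
def Ordinal.nadd.{u} : Ordinal.{u} → Ordinal.{u} → Ordinal.{u}
  | a, b =>
    max (blsub.{u, u} a fun a' _ => Ordinal.nadd a' b) (blsub.{u, u} b fun b' _ => Ordinal.nadd a b')
termination_by a b => (a, b)
decreasing_by
  all_goals first | (apply Prod.Lex.left; assumption) | (apply Prod.Lex.right; assumption)

infixl:65 " ♯ " => Ordinal.nadd

/-- The natural (Hessenberg) sum of a finite family of ordinals. -/
def natSumFam {k : ℕ} (α : Fin k → Ordinal.{0}) : Ordinal := (List.ofFn α).foldr (· ♯ ·) 0

/-- The Milner–Rado sum of a finite family of ordinals. -/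
def mrSumFam {k : ℕ} (α : Fin k → Ordinal.{0}) : Ordinal :=
  sInf {δ | ∀ β : Fin k → Ordinal, (∀ i, β i < α i) → δ ≠ natSumFam β}

/-- The topological pigeonhole relation `β → (top α i)¹` for finitely many colours. -/
def TopPH {k : ℕ} (β : Ordinal.{0}) (α : Fin k → Ordinal.{0}) : Prop :=
  ∀ c : Ordinal → Fin k, ∃ i, HomeoCopy (α i) (Iio β ∩ c ⁻¹' {i})

/-- The topological pigeonhole relation with an arbitrary index type of colours. -/
def TopPHFam {ι : Type*} (β : Ordinal.{0}) (α : ι → Ordinal.{0}) : Prop :=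
  ∀ c : Ordinal → ι, ∃ i, HomeoCopy (α i) (Iio β ∩ c ⁻¹' {i})

/-- `ω̄[γ, m]`: `ω ^ γ * m + 1` if `γ > 0`, and `m` if `γ = 0`. -/
def obar (γ : Ordinal.{0}) (m : ℕ) : Ordinal := if γ = 0 then (m : Ordinal.{0}) else ω ^ γ * m + 1

/-- `C` is closed and unbounded in `o`. -/
def IsClubIn (C : Set Ordinal.{0}) (o : Ordinal.{0}) : Prop :=
  C ⊆ Iio o ∧ (∀ x < o, ∃ y ∈ C, x ≤ y) ∧
    ∀ x < o, x ≠ 0 → (∀ y < x, ∃ z ∈ C, y < z ∧ z < x) → x ∈ C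

/-- `S` is stationary in `o`: it meets every club subset of `o`. -/
def StationaryIn (S : Set Ordinal.{0}) (o : Ordinal.{0}) : Prop :=
  ∀ C, IsClubIn C o → (S ∩ C).Nonempty


-- ===== auxiliary development =====

lemma iterDeriv_zero (s : Set Ordinal.{0}) : iterDeriv s 0 = s := Ordinal.limitRecOn_zero ..

lemma iterDeriv_succ (s : Set Ordinal.{0}) (o : Ordinal.{0}) :
    iterDeriv s (Order.succ o) = deriv' (iterDeriv s o) := Ordinal.limitRecOn_succ ..

lemma iterDeriv_limit (s : Set Ordinal.{0}) {o : Ordinal.{0}} (ho : Order.IsSuccLimit o) :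
    iterDeriv s o = ⋂ (p : Ordinal.{0}) (_ : p < o), iterDeriv s p := by
  exact Ordinal.limitRecOn_limit _ _ _ _ ho

lemma deriv'_subset (s : Set Ordinal.{0}) : deriv' s ⊆ s := fun _ h => h.1

lemma deriv'_mono {s t : Set Ordinal.{0}} (h : s ⊆ t) : deriv' s ⊆ deriv' t := by
  rintro x ⟨hx, hc⟩
  exact ⟨h hx, closure_mono (diff_subset_diff_left h) hc⟩

lemma iterDeriv_subset (s : Set Ordinal.{0}) (o : Ordinal.{0}) : iterDeriv s o ⊆ s := by
  induction o using Ordinal.limitRecOn with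
  | zero => rw [iterDeriv_zero]
  | add_one o ih => rw [Ordinal.add_one_eq_succ, iterDeriv_succ]; exact (deriv'_subset _).trans ih
  | limit o ho ih =>
      rw [iterDeriv_limit s ho]
      intro x hx
      simp only [mem_iInter] at hx
      rw [← iterDeriv_zero s]
      exact hx 0 ho.pos

lemma iterDeriv_mono {s t : Set Ordinal.{0}} (h : s ⊆ t) (o : Ordinal.{0}) :
    iterDeriv s o ⊆ iterDeriv t o := by
  induction o using Ordinal.limitRecOn with
  | zero => rwa [iterDeriv_zero, iterDeriv_zero]
  | add_one o ih => rw [Ordinal.add_one_eq_succ, iterDeriv_succ, iterDeriv_succ]; exact deriv'_mono ih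
  | limit o ho ih =>
      rw [iterDeriv_limit s ho, iterDeriv_limit t ho]
      exact fun x hx => mem_iInter₂.2 fun p hp => ih p hp (mem_iInter₂.1 hx p hp)

lemma mem_closure_sub {s A : Set Ordinal.{0}} (hA : A ⊆ s) (x : s) :
    (x : Ordinal) ∈ closure (A \ {(x : Ordinal)}) ↔
      x ∈ closure ((Subtype.val ⁻¹' A : Set s) \ {x}) := by
  rw [closure_subtype]
  congr! 1
  rw [Set.image_diff Subtype.val_injective, Set.image_singleton,
    Set.image_preimage_eq_inter_range, Subtype.range_coe]
  rw [inter_eq_self_of_subset_left hA]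

lemma iterDeriv_homeo {s t : Set Ordinal.{0}} (e : s ≃ₜ t) (o : Ordinal.{0}) :
    ∀ x : s, (x : Ordinal) ∈ iterDeriv s o ↔ ((e x : t) : Ordinal) ∈ iterDeriv t o := by
  induction o using Ordinal.limitRecOn with
  | zero => intro x; rw [iterDeriv_zero, iterDeriv_zero]; exact iff_of_true x.2 (e x).2
  | add_one o ih =>
      intro x
      rw [Ordinal.add_one_eq_succ, iterDeriv_succ, iterDeriv_succ]
      have hA : iterDeriv s o ⊆ s := iterDeriv_subset s o
      have hB : iterDeriv t o ⊆ t := iterDeriv_subset t o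
      have himg : (⇑e) '' ((Subtype.val ⁻¹' iterDeriv s o : Set s)) =
          (Subtype.val ⁻¹' iterDeriv t o : Set t) := by
        ext z
        constructor
        · rintro ⟨y, hy, rfl⟩; exact (ih y).1 hy
        · intro hz
          exact ⟨e.symm z, by simpa using (ih (e.symm z)).2 (by simpa using hz), by simp⟩
      constructor
      · rintro ⟨hx1, hx2⟩
        refine ⟨(ih x).1 hx1, ?_⟩
        rw [mem_closure_sub hB]
        rw [mem_closure_sub hA] at hx2
        rw [← himg, ← Set.image_singleton (a := x), ← Set.image_diff e.injective,
          ← e.image_closure]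
        exact ⟨x, hx2, rfl⟩
      · rintro ⟨hx1, hx2⟩
        refine ⟨(ih x).2 hx1, ?_⟩
        rw [mem_closure_sub hA]
        rw [mem_closure_sub hB, ← himg, ← Set.image_singleton (a := x),
          ← Set.image_diff e.injective, ← e.image_closure] at hx2
        obtain ⟨y, hy, hye⟩ := hx2
        rwa [e.injective hye] at hy
  | limit o ho ih =>
      intro x
      rw [iterDeriv_limit s ho, iterDeriv_limit t ho]
      simp only [mem_iInter]
      exact ⟨fun h p hp => (ih p hp x).1 (h p hp), fun h p hp => (ih p hp x).2 (h p hp)⟩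

lemma omega0_opow_dvd_limit {x δ : Ordinal.{0}} (hδ : Order.IsSuccLimit δ)
    (h : ∀ p < δ, (ω : Ordinal.{0}) ^ p ∣ x) : (ω : Ordinal.{0}) ^ δ ∣ x := by
  rw [dvd_iff_mod_eq_zero]
  have hr : x % ω ^ δ < ω ^ δ := mod_lt x (opow_ne_zero δ omega0_ne_zero)
  obtain ⟨p, hp, hrp⟩ := ((isNormal_opow one_lt_omega0).lt_iff_exists_lt hδ).1 hr
  have h1 : x % ω ^ δ % ω ^ p = x % ω ^ p := mod_mod_of_dvd x (opow_dvd_opow ω hp.le)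
  rw [mod_eq_of_lt hrp, dvd_iff_mod_eq_zero.1 (h p hp)] at h1
  exact h1

lemma deriv'_dvd_subset (α o : Ordinal.{0}) :
    deriv' {x | x < α ∧ (ω : Ordinal.{0}) ^ o ∣ x} ⊆
      {x | x < α ∧ x ≠ 0 ∧ (ω : Ordinal.{0}) ^ (Order.succ o) ∣ x} := by
  rintro x ⟨⟨hxα, c, rfl⟩, hcl⟩
  set D : Set Ordinal.{0} := {x | x < α ∧ (ω : Ordinal.{0}) ^ o ∣ x} with hD
  have hkey := ((Ordinal.mem_closure_tfae _ (D \ {ω ^ o * c})).out 0 2).1 hcl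
  obtain ⟨hne, hsup⟩ := hkey
  have hopos : (0 : Ordinal) < ω ^ o := opow_pos o omega0_pos
  have hnotsucc : ∀ d : Ordinal, c ≠ d + 1 := by
    rintro d rfl
    have hub : ∀ y ∈ (D \ {ω ^ o * (d + 1)}) ∩ Iic (ω ^ o * (d + 1)), y ≤ ω ^ o * d := by
      rintro y ⟨⟨⟨hyα, k, rfl⟩, hyne⟩, hyle⟩
      have : ω ^ o * k < ω ^ o * (d + 1) := lt_of_le_of_ne hyle (by simpa using hyne)
      have hk : k < d + 1 := (mul_lt_mul_iff_right₀ hopos).1 this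
      exact mul_le_mul_right (Order.lt_succ_iff.1 (by simpa using hk)) _
    have : ω ^ o * (d + 1) ≤ ω ^ o * d := hsup ▸ csSup_le hne hub
    have hlt : ω ^ o * d < ω ^ o * (d + 1) :=
      (mul_lt_mul_iff_right₀ hopos).2 (lt_add_one d)
    exact absurd this hlt.not_ge
  have hc0 : c ≠ 0 := by
    rintro rfl
    simp only [mul_zero] at hne
    obtain ⟨y, ⟨⟨_, _⟩, hyne⟩, hyle⟩ := hne
    exact hyne (le_antisymm hyle zero_le)
  have hr : c % ω = 0 := by
    by_contra hr0
    have : c % ω < ω := mod_lt c omega0_ne_zero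
    obtain ⟨n, hn⟩ := lt_omega0.1 this
    have hn0 : n ≠ 0 := by rintro rfl; apply hr0; rw [hn]; simp
    obtain ⟨k, rfl⟩ : ∃ k : ℕ, n = k + 1 := ⟨n - 1, by omega⟩
    apply hnotsucc (ω * (c / ω) + k)
    conv_lhs => rw [← Ordinal.div_add_mod c ω]
    rw [hn]
    push_cast
    rw [add_assoc]
  obtain ⟨q, hq⟩ : ω ∣ c := dvd_iff_mod_eq_zero.2 hr
  refine ⟨hxα, ?_, q, ?_⟩
  · simp [hc0, hopos.ne']
  · rw [opow_succ, mul_assoc, ← hq]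

lemma dvd_subset_deriv' (α o : Ordinal.{0}) :
    {x | x < α ∧ x ≠ 0 ∧ (ω : Ordinal.{0}) ^ (Order.succ o) ∣ x} ⊆
      deriv' {x | x < α ∧ x ≠ 0 ∧ (ω : Ordinal.{0}) ^ o ∣ x} := by
  rintro x ⟨hxα, hx0, c, rfl⟩
  have hc0 : c ≠ 0 := by rintro rfl; simp at hx0
  have hopos : (0 : Ordinal) < ω ^ o := opow_pos o omega0_pos
  have hx : ω ^ Order.succ o * c = ω ^ o * (ω * c) := by
    rw [opow_succ, mul_assoc]
  have hlim : Order.IsSuccLimit (ω * c) := isSuccLimit_mul_left isSuccLimit_omega0 (pos_iff_ne_zero.2 hc0)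
  refine ⟨⟨hxα, hx0, ⟨ω * c, hx⟩⟩, ?_⟩
  rw [mem_closure_iff_bsup]
  refine ⟨ω * c, hlim.pos.ne', fun i _ => ω ^ o * (Order.succ i), fun i hi => ?_, ?_⟩
  · have hsi : Order.succ i < ω * c := hlim.succ_lt hi
    have hlt : ω ^ o * Order.succ i < ω ^ Order.succ o * c := by
      rw [hx]; exact (mul_lt_mul_iff_right₀ hopos).2 hsi
    refine ⟨⟨hlt.trans hxα, ?_, ⟨Order.succ i, rfl⟩⟩, hlt.ne⟩
    simp [hopos.ne', Ordinal.succ_ne_zero i]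
  · apply le_antisymm
    · refine Ordinal.bsup_le fun i hi => ?_
      rw [hx]
      exact mul_le_mul_right (hlim.succ_lt hi).le _
    · rw [hx, ← Ordinal.IsNormal.bsup_eq (isNormal_mul_right hopos) hlim]
      exact Ordinal.bsup_le fun i hi =>
        (mul_le_mul_right (Order.le_succ i) _).trans (Ordinal.le_bsup _ i hi)

lemma iterDeriv_Iio (α : Ordinal.{0}) :
    ∀ δ : Ordinal.{0}, δ ≠ 0 →
      iterDeriv (Iio α) δ = {x | x < α ∧ x ≠ 0 ∧ (ω : Ordinal.{0}) ^ δ ∣ x} := by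
  intro δ
  induction δ using Ordinal.induction with
  | h δ IH =>
    intro hδ
    rcases Ordinal.zero_or_succ_or_isSuccLimit δ with h0 | ⟨o, rfl⟩ | hlim
    · exact absurd h0 hδ
    · rw [← Ordinal.add_one_eq_succ, Ordinal.add_one_eq_succ, iterDeriv_succ]
      have hsub1 : {x | x < α ∧ x ≠ 0 ∧ (ω : Ordinal.{0}) ^ o ∣ x} ⊆ iterDeriv (Iio α) o := by
        rcases eq_or_ne o 0 with rfl | ho
        · rw [iterDeriv_zero]; exact fun x hx => hx.1
        · rw [IH o (Order.lt_succ o) ho]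
      have hsub2 : iterDeriv (Iio α) o ⊆ {x | x < α ∧ (ω : Ordinal.{0}) ^ o ∣ x} := by
        rcases eq_or_ne o 0 with rfl | ho
        · rw [iterDeriv_zero]; exact fun x hx => ⟨hx, by simp⟩
        · rw [IH o (Order.lt_succ o) ho]; exact fun x hx => ⟨hx.1, hx.2.2⟩
      apply subset_antisymm
      · exact (deriv'_mono hsub2).trans (deriv'_dvd_subset α o)
      · exact (dvd_subset_deriv' α o).trans (deriv'_mono hsub1)
    · rw [iterDeriv_limit _ hlim]
      ext x
      simp only [mem_iInter, mem_setOf_eq]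
      constructor
      · intro h
        have h1 : x ∈ iterDeriv (Iio α) 1 := h 1 (one_lt_of_isSuccLimit hlim)
        rw [IH 1 (one_lt_of_isSuccLimit hlim) one_ne_zero] at h1
        refine ⟨h1.1, h1.2.1, omega0_opow_dvd_limit hlim fun p hp => ?_⟩
        rcases eq_or_ne p 0 with rfl | hp0
        · simp
        · have := h p hp
          rw [IH p hp hp0] at this
          exact this.2.2
      · rintro ⟨hxα, hx0, hdvd⟩ p hp
        rcases eq_or_ne p 0 with rfl | hp0
        · rw [iterDeriv_zero]; exact hxα
        · rw [IH p hp hp0]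
          exact ⟨hxα, hx0, dvd_trans (opow_dvd_opow ω hp.le) hdvd⟩

-- ===== end auxiliary development =====

/-- `ω^γ·m + 1` is not homeomorphic to any subspace of `ω^γ·m`; in particular they are
not biembeddable. -/
theorem not_biembed_succ_self (γ m : Ordinal.{0}) (hγ : γ ≠ 0) (hm : m ≠ 0) (hmfin : m < ω) :
    ¬ HomeoCopy (ω ^ γ * m + 1) (Iio (ω ^ γ * m)) ∧ ¬ Biembed (ω ^ γ * m + 1) (ω ^ γ * m) := by
  obtain ⟨n, rfl⟩ := lt_omega0.1 hmfin
  have hn0 : n ≠ 0 := by rintro rfl; simp at hm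
  have hopos : (0 : Ordinal) < ω ^ γ := opow_pos γ omega0_pos
  have key : ¬ HomeoCopy (ω ^ γ * n + 1) (Iio (ω ^ γ * n)) := by
    rintro ⟨t, hts, ⟨e⟩⟩
    set α₁ : Ordinal.{0} := ω ^ γ * n + 1 with hα₁
    set g : ℕ → Ordinal.{0} := fun k => ω ^ γ * ((k + 1 : ℕ) : Ordinal) with hg
    have hgmono : StrictMono g := by
      intro a b hab
      apply (mul_lt_mul_iff_right₀ hopos).2
      exact_mod_cast Nat.succ_lt_succ hab
    have hB : iterDeriv (Iio α₁) γ = g '' (Set.Iio n) := by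
      rw [iterDeriv_Iio _ γ hγ]
      ext x
      simp only [mem_setOf_eq, mem_image, mem_Iio]
      constructor
      · rintro ⟨hlt, hx0, c, rfl⟩
        have hle : ω ^ γ * c ≤ ω ^ γ * n := by
          rw [hα₁, Ordinal.add_one_eq_succ] at hlt
          exact Order.lt_succ_iff.1 hlt
        have hc : c ≤ (n : Ordinal) := (mul_le_mul_iff_right₀ hopos).1 hle
        obtain ⟨j, rfl⟩ := lt_omega0.1 (hc.trans_lt (nat_lt_omega0 n))
        have hj : j ≤ n := by exact_mod_cast hc
        have hj0 : j ≠ 0 := by rintro rfl; simp at hx0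
        refine ⟨j - 1, by omega, ?_⟩
        have hj1 : j - 1 + 1 = j := by omega
        show ω ^ γ * ((j - 1 + 1 : ℕ) : Ordinal.{0}) = ω ^ γ * (j : Ordinal.{0})
        rw [hj1]
      · rintro ⟨k, hk, rfl⟩
        refine ⟨?_, ?_, ⟨((k + 1 : ℕ) : Ordinal), rfl⟩⟩
        · have h1 : g k ≤ ω ^ γ * n :=
            mul_le_mul_right (by exact_mod_cast Nat.succ_le_of_lt hk) _
          exact h1.trans_lt (lt_add_one _)
        · have hk1 : ((k + 1 : ℕ) : Ordinal.{0}) ≠ 0 := by exact_mod_cast Nat.succ_ne_zero k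
          simp [hg, hopos.ne', hk1, Ordinal.succ_ne_zero]
    have hS : iterDeriv t γ ⊆ g '' (Set.Iio (n - 1)) := by
      intro x hx
      have hx' := iterDeriv_mono hts γ hx
      rw [iterDeriv_Iio _ γ hγ] at hx'
      obtain ⟨hlt, hx0, c, rfl⟩ := hx'
      have hc : c < (n : Ordinal) := (mul_lt_mul_iff_right₀ hopos).1 hlt
      obtain ⟨j, rfl⟩ := lt_omega0.1 (hc.trans (nat_lt_omega0 n))
      have hj : j < n := by exact_mod_cast hc
      have hj0 : j ≠ 0 := by rintro rfl; simp at hx0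
      refine ⟨j - 1, Set.mem_Iio.2 (by omega), ?_⟩
      have hj1 : j - 1 + 1 = j := by omega
      show ω ^ γ * ((j - 1 + 1 : ℕ) : Ordinal.{0}) = ω ^ γ * (j : Ordinal.{0})
      rw [hj1]
    set f : Ordinal.{0} → Ordinal.{0} :=
      fun x => if h : x ∈ Iio α₁ then ((e ⟨x, h⟩ : t) : Ordinal) else 0 with hf
    have hmaps : ∀ x ∈ iterDeriv (Iio α₁) γ, f x ∈ iterDeriv t γ := by
      intro x hx
      have hxlt : x ∈ Iio α₁ := iterDeriv_subset _ _ hx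
      rw [hf]
      simp only [dif_pos hxlt]
      exact (iterDeriv_homeo e γ ⟨x, hxlt⟩).1 hx
    have hinj : Set.InjOn f (iterDeriv (Iio α₁) γ) := by
      intro x hx y hy hxy
      have hxlt : x ∈ Iio α₁ := iterDeriv_subset _ _ hx
      have hylt : y ∈ Iio α₁ := iterDeriv_subset _ _ hy
      rw [hf] at hxy
      simp only [dif_pos hxlt, dif_pos hylt] at hxy
      have h1 : e ⟨x, hxlt⟩ = e ⟨y, hylt⟩ := Subtype.val_injective hxy
      have h2 := e.injective h1
      exact congrArg Subtype.val h2
    have hfin : (iterDeriv t γ).Finite := ((Set.finite_Iio (n - 1)).image g).subset hS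
    have hcard1 : (iterDeriv (Iio α₁) γ).ncard = n := by
      rw [hB, Set.ncard_image_of_injective _ hgmono.injective, ← Finset.coe_Iio,
        Set.ncard_coe_finset, Nat.card_Iio]
    have hcard2 : (iterDeriv t γ).ncard ≤ n - 1 := by
      calc (iterDeriv t γ).ncard ≤ (g '' (Set.Iio (n - 1))).ncard :=
            Set.ncard_le_ncard hS ((Set.finite_Iio (n - 1)).image g)
        _ = n - 1 := by
            rw [Set.ncard_image_of_injective _ hgmono.injective, ← Finset.coe_Iio,
              Set.ncard_coe_finset, Nat.card_Iio]
    have hle := Set.ncard_le_ncard_of_injOn f hmaps hinj hfin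
    omega
  exact ⟨key, fun h => key h.1⟩


end
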